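/- Let X be a compact Hausdorff space, α : X → X a continuous map, A : C(X) → C(X) a transfer operator for (X, α), and μ an α-invariant regular Borel probability measure on X. Then for every n ∈ ℕ and every continuous partition of unity D on X, one has τ_n(μ) ≤ Σ_{g ∈ D} μ(g) · ln( μ(Aⁿg) / μ(g) ). -/

import Mathlib

open scoped BigOperators

/-- The summand `μ(g) · ln(m(Aⁿg)/μ(g))` with the conventions: it is `0` whenever
`μ(g) = 0` (regardless of `m(Aⁿg)`), and it is `−∞` when `μ(g) > 0` but `m(Aⁿg) = 0`. -/
noncomputable def tSummand (a b : ℝ) : EReal :=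
  if a = 0 then 0 else if b = 0 then ⊥ else ((a * Real.log (b / a) : ℝ) : EReal)

/-- A continuous partition of unity on `X`. -/
def IsPartitionOfUnity {X : Type*} [TopologicalSpace X] (D : Finset C(X, ℝ)) : Prop :=
  (∀ g ∈ D, 0 ≤ g) ∧ ∑ g ∈ D, g = 1

/-- A positive normalized linear functional on `C(X, ℝ)` (a regular Borel probability
measure, via the Riesz representation theorem). -/
def IsPosNormalized {X : Type*} [TopologicalSpace X] (μ : C(X, ℝ) →ₗ[ℝ] ℝ) : Prop :=
  (∀ f : C(X, ℝ), 0 ≤ f → 0 ≤ μ f) ∧ μ 1 = 1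

/-- `τ_n(μ) = inf_D sup_m Σ_{g ∈ D} μ(g) ln(m(Aⁿg)/μ(g))`. -/
noncomputable def tauN {X : Type*} [TopologicalSpace X] [CompactSpace X] [T2Space X]
    (A : C(X, ℝ) →ₗ[ℝ] C(X, ℝ)) (μ : C(X, ℝ) →ₗ[ℝ] ℝ) (n : ℕ) : EReal :=
  ⨅ (D : Finset C(X, ℝ)) (_ : IsPartitionOfUnity D),
    ⨆ (m : C(X, ℝ) →ₗ[ℝ] ℝ) (_ : IsPosNormalized m),
      ∑ g ∈ D, tSummand (μ g) (m ((A ^ n) g))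

set_option linter.unusedSectionVars false
set_option linter.unusedVariables false

noncomputable def Glog (a y : ℝ) : ℝ := if a = 0 then 0 else a * Real.log (y / a)

lemma Glog_zero (y : ℝ) : Glog 0 y = 0 := by simp [Glog]

lemma Glog_of_ne {a y : ℝ} (h : a ≠ 0) : Glog a y = a * Real.log (y / a) := if_neg h

lemma Glog_mono {a y y' : ℝ} (ha : 0 ≤ a) (hy : 0 < y) (h : y ≤ y') : Glog a y ≤ Glog a y' := by
  by_cases h0 : a = 0
  · simp [h0, Glog]
  · have hapos : 0 < a := lt_of_le_of_ne ha (Ne.symm h0)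
    rw [Glog_of_ne h0, Glog_of_ne h0]
    have : Real.log (y / a) ≤ Real.log (y' / a) := by
      apply Real.log_le_log (by positivity)
      gcongr
    exact mul_le_mul_of_nonneg_left this ha

/-- the log-sum (Jensen/Gibbs) inequality -/
lemma Glog_sum_le {κ : Type*} (s : Finset κ) (p y : κ → ℝ)
    (hp : ∀ k ∈ s, 0 ≤ p k) (hy : ∀ k ∈ s, 0 ≤ y k)
    (hpy : ∀ k ∈ s, 0 < p k → 0 < y k) :
    ∑ k ∈ s, Glog (p k) (y k) ≤ Glog (∑ k ∈ s, p k) (∑ k ∈ s, y k) := by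
  set P := ∑ k ∈ s, p k with hP
  set Y := ∑ k ∈ s, y k with hY
  rcases eq_or_lt_of_le (Finset.sum_nonneg hp) with h0 | hPpos
  · -- P = 0, all p zero
    have hall : ∀ k ∈ s, p k = 0 := by
      intro k hk
      exact (Finset.sum_eq_zero_iff_of_nonneg hp).mp h0.symm k hk
    have h1 : ∑ k ∈ s, Glog (p k) (y k) = 0 := by
      apply Finset.sum_eq_zero
      intro k hk; rw [hall k hk, Glog_zero]
    have h2 : P = 0 := hP.trans h0.symm
    rw [h1, h2, Glog_zero]
  · -- P > 0
    rw [← hP] at hPpos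
    have hex : ∃ k ∈ s, 0 < p k := by
      by_contra hcon
      push_neg at hcon
      have h2 : P = 0 := hP.trans
        (Finset.sum_eq_zero (fun k hk => le_antisymm (hcon k hk) (hp k hk)))
      rw [h2] at hPpos; exact lt_irrefl _ hPpos
    obtain ⟨k₀, hk₀, hpk₀⟩ := hex
    have hYpos : 0 < Y := lt_of_lt_of_le (hpy k₀ hk₀ hpk₀) (Finset.single_le_sum hy hk₀)
    have key : ∀ k ∈ s, Glog (p k) (y k) ≤ P / Y * y k - p k + p k * Real.log (Y / P) := by
      intro k hk
      by_cases h0 : p k = 0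
      · have h3 : 0 ≤ P / Y * y k :=
          mul_nonneg (le_of_lt (div_pos hPpos hYpos)) (hy k hk)
        rw [h0, Glog_zero]
        simp only [h0, sub_zero, zero_mul, add_zero]
        linarith
      · have hpk : 0 < p k := lt_of_le_of_ne (hp k hk) (Ne.symm h0)
        have hyk : 0 < y k := hpy k hk hpk
        rw [Glog_of_ne h0]
        have hlog : Real.log (y k / p k) = Real.log (y k * P / (p k * Y)) + Real.log (Y / P) := by
          rw [← Real.log_mul (by positivity) (by positivity)]
          congr 1
          field_simp
        have hle : Real.log (y k * P / (p k * Y)) ≤ y k * P / (p k * Y) - 1 :=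
          Real.log_le_sub_one_of_pos (by positivity)
        have : p k * Real.log (y k * P / (p k * Y)) ≤ P / Y * y k - p k := by
          have := mul_le_mul_of_nonneg_left hle (le_of_lt hpk)
          calc p k * Real.log (y k * P / (p k * Y)) ≤ p k * (y k * P / (p k * Y) - 1) := this
            _ = P / Y * y k - p k := by field_simp
        rw [hlog, mul_add]
        linarith
    calc ∑ k ∈ s, Glog (p k) (y k)
        ≤ ∑ k ∈ s, (P / Y * y k - p k + p k * Real.log (Y / P)) := Finset.sum_le_sum key
      _ = P / Y * Y - P + P * Real.log (Y / P) := by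
          rw [Finset.sum_add_distrib, Finset.sum_sub_distrib, ← Finset.mul_sum, ← Finset.sum_mul]
      _ = P * Real.log (Y / P) := by field_simp; ring
      _ = Glog P Y := (Glog_of_ne (ne_of_gt hPpos)).symm

lemma tS_ne_top (a b : ℝ) : tSummand a b ≠ ⊤ := by
  unfold tSummand
  split_ifs <;> simp [← EReal.coe_mul]

lemma tS_le_coe_Glog {a b y : ℝ} (ha : 0 ≤ a) (hb : 0 ≤ b) (hby : b ≤ y)
    (hy : a ≠ 0 → 0 < y) : tSummand a b ≤ ((Glog a y : ℝ) : EReal) := by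
  unfold tSummand
  by_cases h0 : a = 0
  · simp [h0, Glog_zero]
  · rw [if_neg h0]
    by_cases hb0 : b = 0
    · simp [hb0]
    · rw [if_neg hb0, Glog_of_ne h0, EReal.coe_le_coe_iff]
      have hapos : 0 < a := lt_of_le_of_ne ha (Ne.symm h0)
      have hbpos : 0 < b := lt_of_le_of_ne hb (Ne.symm hb0)
      apply mul_le_mul_of_nonneg_left _ ha
      apply Real.log_le_log (by positivity)
      gcongr

lemma tS_scale {t a b : ℝ} (ht : 0 < t) :
    tSummand (t * a) (t * b) = ((t : ℝ) : EReal) * tSummand a b := by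
  unfold tSummand
  have ht' : t ≠ 0 := ne_of_gt ht
  by_cases h0 : a = 0
  · simp [h0]
  · rw [if_neg h0, if_neg (by exact mul_ne_zero ht' h0)]
    by_cases hb0 : b = 0
    · subst hb0
      rw [if_pos (mul_zero t), if_pos rfl]
      exact (EReal.coe_mul_bot_of_pos ht).symm
    · rw [if_neg hb0, if_neg (mul_ne_zero ht' hb0), ← EReal.coe_mul]
      congr 1
      rw [mul_div_mul_left b a ht']
      ring

lemma tS_split {t : ℝ} (ht : 0 < t) (ht1 : t < 1) (a b : ℝ) :
    ((t : ℝ) : EReal) * tSummand a b + (((1 - t : ℝ)) : EReal) * tSummand a b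
      = tSummand a b := by
  unfold tSummand
  split_ifs with h1 h2
  · simp
  · rw [EReal.coe_mul_bot_of_pos ht, EReal.coe_mul_bot_of_pos (by linarith)]
    rfl
  · rw [← EReal.coe_mul, ← EReal.coe_mul, ← EReal.coe_add]
    congr 1
    ring

lemma coe_sum_ereal {κ : Type*} (s : Finset κ) (f : κ → ℝ) :
    ((∑ k ∈ s, f k : ℝ) : EReal) = ∑ k ∈ s, ((f k : ℝ) : EReal) := by
  classical
  induction s using Finset.induction_on with
  | empty => simp
  | insert a s h ih => rw [Finset.sum_insert h, Finset.sum_insert h, EReal.coe_add, ih]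

lemma sum_eq_bot_of_mem {κ : Type*} (s : Finset κ) (f : κ → EReal) {k : κ}
    (hk : k ∈ s) (hbot : f k = ⊥) : ∑ j ∈ s, f j = ⊥ := by
  classical
  rw [← Finset.add_sum_erase s f hk, hbot, EReal.bot_add]


section SplitSection
variable {X : Type*} [TopologicalSpace X]

lemma smul_cm_injective {f : C(X, ℝ)} (hf : f ≠ 0) :
    Function.Injective (fun t : ℝ => t • f) := by
  intro t s h
  simp only at h
  by_contra hts
  obtain ⟨x, hx⟩ : ∃ x, f x ≠ 0 := by
    by_contra hc
    push_neg at hc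
    exact hf (ContinuousMap.ext fun x => hc x)
  have := congrArg (fun u : C(X, ℝ) => u x) h
  simp only [ContinuousMap.smul_apply, smul_eq_mul] at this
  exact hts (mul_right_cancel₀ hx this)

lemma exists_split {κ : Type*} [DecidableEq κ] (s : Finset κ) (v : κ → C(X, ℝ))
    (hv : ∀ k ∈ s, 0 ≤ v k) :
    ∃ E : Finset C(X, ℝ), (∀ e ∈ E, 0 ≤ e) ∧ (∑ e ∈ E, e) = ∑ k ∈ s, v k ∧
      ∀ ρ σ : C(X, ℝ) →ₗ[ℝ] ℝ,
        ∑ e ∈ E, tSummand (ρ e) (σ e) = ∑ k ∈ s, tSummand (ρ (v k)) (σ (v k)) := by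
  classical
  induction s using Finset.induction_on with
  | empty => exact ⟨∅, by simp, by simp, fun ρ σ => by simp⟩
  | @insert k s hk ih =>
      obtain ⟨E, hE0, hEsum, hEt⟩ := ih (fun j hj => hv j (Finset.mem_insert_of_mem hj))
      by_cases hzero : v k = 0
      · refine ⟨E, hE0, ?_, fun ρ σ => ?_⟩
        · rw [hEsum, Finset.sum_insert hk, hzero, zero_add]
        · rw [hEt ρ σ, Finset.sum_insert hk, hzero]
          simp [tSummand]
      · -- choose a good scalar t
        have hbadfin : ({t : ℝ | t • v k ∈ E} ∪ {t : ℝ | (1 - t) • v k ∈ E}).Finite := by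
          apply Set.Finite.union
          · exact Set.Finite.preimage (Function.Injective.injOn (smul_cm_injective hzero))
              E.finite_toSet
          · have : {t : ℝ | (1 - t) • v k ∈ E}
                = (fun t : ℝ => 1 - t) ⁻¹' {t : ℝ | t • v k ∈ E} := rfl
            rw [this]
            apply Set.Finite.preimage _ (Set.Finite.preimage
              (Function.Injective.injOn (smul_cm_injective hzero)) E.finite_toSet)
            exact Function.Injective.injOn (fun a b h => by simpa using h)
        obtain ⟨t, htmem, htbad⟩ :=
          ((Set.Ioo_infinite (by norm_num : (0:ℝ) < 1/2)).diff hbadfin).nonempty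
        obtain ⟨ht0, ht2⟩ := htmem
        have ht1 : t < 1 := by linarith
        have htne : t ≠ 1 - t := by intro h; linarith [h]
        have h1t0 : (0:ℝ) < 1 - t := by linarith
        simp only [Set.mem_union, Set.mem_setOf_eq, not_or] at htbad
        obtain ⟨hb1, hb2⟩ := htbad
        have hne12 : t • v k ≠ (1 - t) • v k := fun h => htne (smul_cm_injective hzero h)
        have hnotmem1 : t • v k ∉ insert ((1 - t) • v k) E := by
          simp only [Finset.mem_insert, not_or]
          exact ⟨hne12, hb1⟩
        refine ⟨insert (t • v k) (insert ((1 - t) • v k) E), ?_, ?_, ?_⟩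
        · intro e he
          simp only [Finset.mem_insert] at he
          rcases he with rfl | rfl | he
          · exact smul_nonneg (le_of_lt ht0) (hv k (Finset.mem_insert_self k s))
          · exact smul_nonneg (le_of_lt h1t0) (hv k (Finset.mem_insert_self k s))
          · exact hE0 e he
        · rw [Finset.sum_insert hnotmem1, Finset.sum_insert hb2, hEsum,
            Finset.sum_insert hk, ← add_assoc, ← add_smul]
          norm_num
        · intro ρ σ
          rw [Finset.sum_insert hnotmem1, Finset.sum_insert hb2, hEt ρ σ,
            Finset.sum_insert hk]
          have e1 : ρ (t • v k) = t * ρ (v k) := by rw [map_smul]; rfl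
          have e2 : σ (t • v k) = t * σ (v k) := by rw [map_smul]; rfl
          have e3 : ρ ((1 - t) • v k) = (1 - t) * ρ (v k) := by rw [map_smul]; rfl
          have e4 : σ ((1 - t) • v k) = (1 - t) * σ (v k) := by rw [map_smul]; rfl
          rw [e1, e2, e3, e4, tS_scale ht0, tS_scale h1t0, ← add_assoc,
            tS_split ht0 ht1]

end SplitSection

section Main
variable {X : Type*} [TopologicalSpace X]

/-- iterate of a continuous self-map -/
noncomputable def citer (α : C(X, X)) : ℕ → C(X, X)
  | 0 => ContinuousMap.id X
  | n + 1 => (citer α n).comp α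

lemma pow_hom (α : C(X, X)) (A : C(X, ℝ) →ₗ[ℝ] C(X, ℝ))
    (hA_hom : ∀ f g : C(X, ℝ), A ((f.comp α) * g) = f * A g) (n : ℕ) :
    ∀ f g : C(X, ℝ), (A ^ n) ((f.comp (citer α n)) * g) = f * (A ^ n) g := by
  induction n with
  | zero =>
      intro f g
      simp [citer, pow_zero, Module.End.one_apply, ContinuousMap.comp_id]
  | succ n ih =>
      intro f g
      have h1 : f.comp (citer α (n + 1)) = (f.comp (citer α n)).comp α := by
        rfl
      rw [pow_succ, Module.End.mul_apply, h1, hA_hom (f.comp (citer α n)) g, ih, Module.End.mul_apply]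

lemma pow_pos_map (A : C(X, ℝ) →ₗ[ℝ] C(X, ℝ))
    (hA_pos : ∀ f : C(X, ℝ), 0 ≤ f → 0 ≤ A f) (n : ℕ) :
    ∀ f : C(X, ℝ), 0 ≤ f → 0 ≤ (A ^ n) f := by
  induction n with
  | zero => intro f hf; simpa [pow_zero, Module.End.one_apply] using hf
  | succ n ih =>
      intro f hf
      rw [pow_succ, Module.End.mul_apply]
      exact ih _ (hA_pos f hf)

lemma iter_inv (α : C(X, X)) (μ : C(X, ℝ) →ₗ[ℝ] ℝ)
    (hμinv : ∀ f : C(X, ℝ), μ (f.comp α) = μ f) (n : ℕ) :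
    ∀ f : C(X, ℝ), μ (f.comp (citer α n)) = μ f := by
  induction n with
  | zero => intro f; simp [citer, ContinuousMap.comp_id]
  | succ n ih =>
      intro f
      have h1 : f.comp (citer α (n + 1)) = (f.comp (citer α n)).comp α := rfl
      rw [h1, hμinv, ih]

end Main

section KeyEps
variable {X : Type*} [TopologicalSpace X] [CompactSpace X] [T2Space X]

lemma mul_nonneg_cm {f g : C(X, ℝ)} (hf : 0 ≤ f) (hg : 0 ≤ g) : 0 ≤ f * g := by
  rw [ContinuousMap.le_def] at *
  intro x
  simpa using mul_nonneg (hf x) (hg x)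

lemma key_eps (α : C(X, X)) (A : C(X, ℝ) →ₗ[ℝ] C(X, ℝ))
    (hA_pos : ∀ f : C(X, ℝ), 0 ≤ f → 0 ≤ A f)
    (hA_hom : ∀ f g : C(X, ℝ), A ((f.comp α) * g) = f * A g)
    (μ : C(X, ℝ) →ₗ[ℝ] ℝ) (hμ : IsPosNormalized μ)
    (hμinv : ∀ f : C(X, ℝ), μ (f.comp α) = μ f)
    (n : ℕ) (D : Finset C(X, ℝ)) (hD : IsPartitionOfUnity D)
    (ε : ℝ) (hε : 0 < ε) :
    tauN A μ n ≤ ((∑ g ∈ D, Glog (μ g) (μ ((A ^ n) g) + ε) : ℝ) : EReal) := by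
  classical
  obtain ⟨hμpos, hμ1⟩ := hμ
  have hμmono : ∀ {f g : C(X, ℝ)}, f ≤ g → μ f ≤ μ g := by
    intro f g hfg
    have := hμpos (g - f) (by rwa [sub_nonneg])
    have h2 : μ (g - f) = μ g - μ f := by rw [map_sub]
    linarith [h2 ▸ this]
  have hTpos : ∀ f : C(X, ℝ), 0 ≤ f → 0 ≤ (A ^ n) f := pow_pos_map A hA_pos n
  have hThom := pow_hom α A hA_hom n
  have hμiter := iter_inv α μ hμinv n
  set β := citer α n with hβ
  set T : C(X, ℝ) → C(X, ℝ) := fun g => (A ^ n) g with hTdef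
  -- the open cover
  set O : X → Set X := fun x => {y | ∀ g ∈ D, |T g y - T g x| < ε / 3} with hO
  have hOopen : ∀ x, IsOpen (O x) := by
    intro x
    have h1 : O x = ⋂ g ∈ D, {y | |T g y - T g x| < ε / 3} := by
      ext y; simp [hO]
    rw [h1]
    apply isOpen_biInter_finset
    intro g _
    have h2 : IsOpen ((fun y => |T g y - T g x|) ⁻¹' Set.Iio (ε / 3)) :=
      IsOpen.preimage (Continuous.abs ((T g).continuous.sub continuous_const)) isOpen_Iio
    convert h2 using 1
    rfl
  have hOmem : ∀ x, x ∈ O x := by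
    intro x
    intro g _
    simpa using by positivity
  obtain ⟨S, hS⟩ := isCompact_univ.elim_finite_subcover O hOopen
    (fun x _ => Set.mem_iUnion.mpr ⟨x, hOmem x⟩)
  have hScover : (Set.univ : Set X) ⊆ ⋃ i : {x // x ∈ S}, O i := by
    intro y hy
    obtain ⟨x, hx, hyx⟩ := Set.mem_iUnion₂.mp (hS hy)
    exact Set.mem_iUnion.mpr ⟨⟨x, hx⟩, hyx⟩
  obtain ⟨f, hfsub⟩ := PartitionOfUnity.exists_isSubordinate isClosed_univ
    (fun i : {x // x ∈ S} => O i) (fun i => hOopen i) hScover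
  -- basic facts about f
  have hf0 : ∀ i, (0 : C(X, ℝ)) ≤ f i := by
    intro i; rw [ContinuousMap.le_def]; intro x; simpa using f.nonneg i x
  have hfsum : (∑ i : {x // x ∈ S}, (f i : C(X, ℝ))) = 1 := by
    ext x
    rw [ContinuousMap.sum_apply]
    have := f.sum_eq_one (Set.mem_univ x)
    rw [finsum_eq_sum_of_fintype] at this
    simpa using this
  -- the constants
  set c : {x // x ∈ S} → C(X, ℝ) → ℝ := fun i g => T g (i : X) + ε / 3 with hc
  have hTgnn : ∀ g ∈ D, (0 : C(X, ℝ)) ≤ T g := fun g hg => hTpos g (hD.1 g hg)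
  have hcpos : ∀ i, ∀ g ∈ D, 0 < c i g := by
    intro i g hg
    have h1 : (0 : ℝ) ≤ T g (i : X) := by
      have := (ContinuousMap.le_def.mp (hTgnn g hg)) (i : X)
      simpa using this
    rw [hc]
    dsimp only
    linarith
  have hmemO : ∀ (i : {x // x ∈ S}) (y : X), (f i) y ≠ 0 → y ∈ O i := by
    intro i y hy
    exact hfsub i (subset_closure (Function.mem_support.mpr hy))
  -- (h1) pointwise domination
  have h1 : ∀ (i : {x // x ∈ S}), ∀ g ∈ D, (f i : C(X, ℝ)) * T g ≤ c i g • (f i : C(X, ℝ)) := by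
    intro i g hg
    rw [ContinuousMap.le_def]
    intro y
    by_cases hy : (f i) y = 0
    · simp [hy]
    · have hyO := hmemO i y hy
      have habs := hyO g hg
      have hTgy : T g y ≤ c i g := by
        rw [hc]; dsimp only
        cases abs_lt.mp habs with
        | intro hl hr => linarith
      have hfnn : (0 : ℝ) ≤ (f i) y := f.nonneg i y
      have := mul_le_mul_of_nonneg_left hTgy hfnn
      simpa [mul_comm] using this
  -- (h3) sum of constants
  have h3 : ∀ g ∈ D, ∑ i : {x // x ∈ S}, c i g * μ (f i) ≤ μ (T g) + ε := by
    intro g hg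
    have hpt : ∀ i : {x // x ∈ S},
        c i g • (f i : C(X, ℝ)) ≤ T g * (f i) + (2 * ε / 3) • (f i : C(X, ℝ)) := by
      intro i
      rw [ContinuousMap.le_def]
      intro y
      by_cases hy : (f i) y = 0
      · simp [hy]
      · have hyO := hmemO i y hy
        have habs := hyO g hg
        have hcy : c i g ≤ T g y + 2 * ε / 3 := by
          rw [hc]; dsimp only
          cases abs_lt.mp habs with
          | intro hl hr => linarith
        have hfnn : (0 : ℝ) ≤ (f i) y := f.nonneg i y
        have := mul_le_mul_of_nonneg_right hcy hfnn
        simp only [ContinuousMap.add_apply, ContinuousMap.mul_apply,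
          ContinuousMap.smul_apply, smul_eq_mul]
        calc c i g * (f i) y ≤ (T g y + 2 * ε / 3) * (f i) y := this
          _ = T g y * (f i) y + 2 * ε / 3 * (f i) y := by ring
    have hterm : ∀ i : {x // x ∈ S},
        c i g * μ (f i) ≤ μ (T g * (f i)) + 2 * ε / 3 * μ (f i) := by
      intro i
      have := hμmono (hpt i)
      rw [map_smul, smul_eq_mul] at this
      rw [map_add, map_smul, smul_eq_mul] at this
      exact this
    calc ∑ i : {x // x ∈ S}, c i g * μ (f i)
        ≤ ∑ i : {x // x ∈ S}, (μ (T g * (f i)) + 2 * ε / 3 * μ (f i)) :=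
          Finset.sum_le_sum (fun i _ => hterm i)
      _ = μ (T g * ∑ i : {x // x ∈ S}, (f i : C(X, ℝ)))
            + 2 * ε / 3 * μ (∑ i : {x // x ∈ S}, (f i : C(X, ℝ))) := by
          rw [Finset.sum_add_distrib, Finset.mul_sum, map_sum, ← Finset.mul_sum, ← map_sum, ← map_sum]
      _ = μ (T g) + 2 * ε / 3 := by rw [hfsum, mul_one, hμ1, mul_one]
      _ ≤ μ (T g) + ε := by linarith
  -- the product family
  set v : {x // x ∈ S} × C(X, ℝ) → C(X, ℝ) :=
    fun p => ((f p.1 : C(X, ℝ)).comp β) * p.2 with hvdef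
  have hcomp_nn : ∀ i : {x // x ∈ S}, (0 : C(X, ℝ)) ≤ (f i : C(X, ℝ)).comp β := by
    intro i
    rw [ContinuousMap.le_def]
    intro y
    simpa using f.nonneg i (β y)
  have hcomp_le1 : ∀ i : {x // x ∈ S}, ((f i : C(X, ℝ)).comp β) ≤ 1 := by
    intro i
    rw [ContinuousMap.le_def]
    intro y
    simpa using f.le_one i (β y)
  have hgnn : ∀ g ∈ D, (0 : C(X, ℝ)) ≤ g := hD.1
  have hgle1 : ∀ g ∈ D, g ≤ (1 : C(X, ℝ)) := by
    intro g hg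
    have h2 := Finset.single_le_sum (f := fun g : C(X, ℝ) => g) hD.1 hg
    rwa [hD.2] at h2
  have hvnn : ∀ i : {x // x ∈ S}, ∀ g ∈ D, (0 : C(X, ℝ)) ≤ v (i, g) := by
    intro i g hg
    exact mul_nonneg_cm (hcomp_nn i) (hgnn g hg)
  have hcompsum : (∑ i : {x // x ∈ S}, (f i : C(X, ℝ))).comp β
      = ∑ i : {x // x ∈ S}, ((f i : C(X, ℝ)).comp β) :=
    map_sum (ContinuousMap.compRightAlgHom ℝ ℝ β) _ _
  have hcompsum1 : ∑ i : {x // x ∈ S}, ((f i : C(X, ℝ)).comp β) = 1 := by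
    rw [← hcompsum, hfsum]
    rfl
  have hsum_i : ∀ g ∈ D, ∑ i : {x // x ∈ S}, v (i, g) = g := by
    intro g hg
    have : ∑ i : {x // x ∈ S}, v (i, g)
        = (∑ i : {x // x ∈ S}, ((f i : C(X, ℝ)).comp β)) * g := by
      rw [Finset.sum_mul]
    rw [this, hcompsum1, one_mul]
  have hsum_g : ∀ i : {x // x ∈ S}, ∑ g ∈ D, v (i, g) = (f i : C(X, ℝ)).comp β := by
    intro i
    have : ∑ g ∈ D, v (i, g) = ((f i : C(X, ℝ)).comp β) * ∑ g ∈ D, g := by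
      rw [Finset.mul_sum]
    rw [this, hD.2, mul_one]
  have hsumv1 : ∑ p ∈ Finset.univ ×ˢ D, v p = 1 := by
    rw [Finset.sum_product]
    calc ∑ i : {x // x ∈ S}, ∑ g ∈ D, v (i, g)
        = ∑ i : {x // x ∈ S}, ((f i : C(X, ℝ)).comp β) :=
          Finset.sum_congr rfl (fun i _ => hsum_g i)
      _ = 1 := hcompsum1
  -- marginal facts
  have hPnn : ∀ i : {x // x ∈ S}, ∀ g ∈ D, 0 ≤ μ (v (i, g)) := by
    intro i g hg; exact hμpos _ (hvnn i g hg)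
  have hPle_fi : ∀ i : {x // x ∈ S}, ∀ g ∈ D, μ (v (i, g)) ≤ μ (f i) := by
    intro i g hg
    have hle : v (i, g) ≤ (f i : C(X, ℝ)).comp β := by
      rw [ContinuousMap.le_def]
      intro y
      have h2 := f.nonneg i (β y)
      have h3 := ContinuousMap.le_def.mp (hgle1 g hg) y
      have h4 := ContinuousMap.le_def.mp (hgnn g hg) y
      simp only [hvdef, ContinuousMap.mul_apply, ContinuousMap.comp_apply]
      calc (f i) (β y) * g y ≤ (f i) (β y) * 1 := by
            apply mul_le_mul_of_nonneg_left _ h2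
            simpa using h3
        _ = (f i) (β y) := mul_one _
    calc μ (v (i, g)) ≤ μ ((f i : C(X, ℝ)).comp β) := hμmono hle
      _ = μ (f i) := hμiter _
  have hPle_g : ∀ i : {x // x ∈ S}, ∀ g ∈ D, μ (v (i, g)) ≤ μ g := by
    intro i g hg
    apply hμmono
    rw [ContinuousMap.le_def]
    intro y
    have h2 := ContinuousMap.le_def.mp (hcomp_le1 i) y
    have h4 := ContinuousMap.le_def.mp (hgnn g hg) y
    simp only [hvdef, ContinuousMap.mul_apply, ContinuousMap.comp_apply]
    calc (f i) (β y) * g y ≤ 1 * g y := by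
          apply mul_le_mul_of_nonneg_right _ (by simpa using h4)
          simpa using h2
      _ = g y := one_mul _
  have hmarg_i : ∀ i : {x // x ∈ S}, ∑ g ∈ D, μ (v (i, g)) = μ (f i) := by
    intro i
    rw [← map_sum, hsum_g i, hμiter]
  have hmarg_g : ∀ g ∈ D, ∑ i : {x // x ∈ S}, μ (v (i, g)) = μ g := by
    intro g hg
    rw [← map_sum, hsum_i g hg]
  have hμfnn : ∀ i : {x // x ∈ S}, 0 ≤ μ (f i) := fun i => hμpos _ (hf0 i)
  have hμfsum : ∑ i : {x // x ∈ S}, μ (f i) = 1 := by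
    rw [← map_sum, hfsum, hμ1]
  have hTv : ∀ p : {x // x ∈ S} × C(X, ℝ), (A ^ n) (v p) = (f p.1 : C(X, ℝ)) * T p.2 :=
    fun p => hThom _ _
  -- split to get a genuine partition
  obtain ⟨E, hE0, hEsum, hEt⟩ := exists_split (Finset.univ ×ˢ D) v
    (fun p hp => by
      rcases Finset.mem_product.mp hp with ⟨_, hp2⟩
      exact hvnn p.1 p.2 hp2)
  have hEpart : IsPartitionOfUnity E := ⟨hE0, by rw [hEsum, hsumv1]⟩
  have hstep1 : tauN A μ n ≤ ⨆ (m : C(X, ℝ) →ₗ[ℝ] ℝ) (_ : IsPosNormalized m),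
      ∑ e ∈ E, tSummand (μ e) (m ((A ^ n) e)) := by
    unfold tauN
    exact iInf_le_of_le E (iInf_le _ hEpart)
  refine le_trans hstep1 (iSup₂_le ?_)
  intro m hm
  obtain ⟨hmpos, hm1⟩ := hm
  have hmmono : ∀ {a b : C(X, ℝ)}, a ≤ b → m a ≤ m b := by
    intro a b hab
    have := hmpos (b - a) (by rwa [sub_nonneg])
    have h2 : m (b - a) = m b - m a := by rw [map_sub]
    linarith [h2 ▸ this]
  have hmfnn : ∀ i : {x // x ∈ S}, 0 ≤ m (f i) := fun i => hmpos _ (hf0 i)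
  have hmfsum : ∑ i : {x // x ∈ S}, m (f i) = 1 := by
    rw [← map_sum, hfsum, hm1]
  -- rewrite the sum over E as sum over pairs
  have hrw : ∑ e ∈ E, tSummand (μ e) (m ((A ^ n) e))
      = ∑ p ∈ Finset.univ ×ˢ D, tSummand (μ (v p)) (m ((A ^ n) (v p))) := by
    have h2 := hEt μ (m ∘ₗ (A ^ n))
    simpa using h2
  rw [hrw, Finset.sum_product]
  -- bounds for the m-values
  have hbnn : ∀ i : {x // x ∈ S}, ∀ g ∈ D, 0 ≤ m ((A ^ n) (v (i, g))) := by
    intro i g hg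
    exact hmpos _ (hTpos _ (hvnn i g hg))
  have hble : ∀ i : {x // x ∈ S}, ∀ g ∈ D,
      m ((A ^ n) (v (i, g))) ≤ c i g * m (f i) := by
    intro i g hg
    have h2 := hmmono (h1 i g hg)
    rw [map_smul, smul_eq_mul] at h2
    calc m ((A ^ n) (v (i, g))) = m ((f i : C(X, ℝ)) * T g) := by rw [hTv (i, g)]
      _ ≤ c i g * m (f i) := h2
  by_cases hbad : ∃ i : {x // x ∈ S}, ∃ g ∈ D, μ (v (i, g)) ≠ 0 ∧ c i g * m (f i) = 0
  · -- a bottom term appears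
    obtain ⟨i, g, hg, hPne, hczero⟩ := hbad
    have hb0 : m ((A ^ n) (v (i, g))) = 0 :=
      le_antisymm (by rw [← hczero] at *; exact hczero ▸ hble i g hg) (hbnn i g hg)
    have hterm : tSummand (μ (v (i, g))) (m ((A ^ n) (v (i, g)))) = ⊥ := by
      rw [hb0]; simp [tSummand, hPne]
    have hinner : ∑ g ∈ D, tSummand (μ (v (i, g))) (m ((A ^ n) (v (i, g)))) = ⊥ :=
      sum_eq_bot_of_mem D _ hg hterm
    have houter : ∑ i : {x // x ∈ S}, ∑ g ∈ D,
        tSummand (μ (v (i, g))) (m ((A ^ n) (v (i, g)))) = ⊥ :=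
      sum_eq_bot_of_mem Finset.univ _ (Finset.mem_univ i) hinner
    rw [houter]
    exact bot_le
  -- no bottom terms: all real
  push_neg at hbad
  have hcm_pos : ∀ i : {x // x ∈ S}, ∀ g ∈ D, μ (v (i, g)) ≠ 0 → 0 < c i g * m (f i) := by
    intro i g hg hne
    have h2 := hbad i g hg hne
    have h3 : 0 ≤ c i g * m (f i) := mul_nonneg (le_of_lt (hcpos i g hg)) (hmfnn i)
    exact lt_of_le_of_ne h3 (Ne.symm h2)
  have hmf_pos : ∀ i : {x // x ∈ S}, ∀ g ∈ D, μ (v (i, g)) ≠ 0 → 0 < m (f i) := by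
    intro i g hg hne
    have h2 := hcm_pos i g hg hne
    by_contra hmle
    push_neg at hmle
    have : m (f i) = 0 := le_antisymm hmle (hmfnn i)
    rw [this, mul_zero] at h2
    exact lt_irrefl _ h2
  -- termwise passage to real numbers
  have htermwise : ∀ i : {x // x ∈ S}, ∀ g ∈ D,
      tSummand (μ (v (i, g))) (m ((A ^ n) (v (i, g))))
        ≤ ((Glog (μ (v (i, g))) (c i g * m (f i)) : ℝ) : EReal) := by
    intro i g hg
    exact tS_le_coe_Glog (hPnn i g hg) (hbnn i g hg) (hble i g hg) (hcm_pos i g hg)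
  have hsum1 : ∑ i : {x // x ∈ S}, ∑ g ∈ D,
      tSummand (μ (v (i, g))) (m ((A ^ n) (v (i, g))))
      ≤ ((∑ i : {x // x ∈ S}, ∑ g ∈ D, Glog (μ (v (i, g))) (c i g * m (f i)) : ℝ) : EReal) := by
    rw [coe_sum_ereal]
    apply Finset.sum_le_sum
    intro i _
    rw [coe_sum_ereal]
    exact Finset.sum_le_sum (fun g hg => htermwise i g hg)
  refine le_trans hsum1 ?_
  rw [EReal.coe_le_coe_iff]
  -- now a purely real estimate
  -- step R1 : split off the Gibbs part
  have hR1 : ∀ i : {x // x ∈ S}, ∀ g ∈ D,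
      Glog (μ (v (i, g))) (c i g * m (f i))
        ≤ Glog (μ (v (i, g))) (c i g * μ (f i))
          + μ (v (i, g)) * Real.log (m (f i) / μ (f i)) := by
    intro i g hg
    by_cases hP : μ (v (i, g)) = 0
    · rw [hP, Glog_zero, Glog_zero, zero_mul, add_zero]
    · have hPpos : 0 < μ (v (i, g)) := lt_of_le_of_ne (hPnn i g hg) (Ne.symm hP)
      have hμfi : 0 < μ (f i) := lt_of_lt_of_le hPpos (hPle_fi i g hg)
      have hmfi : 0 < m (f i) := hmf_pos i g hg hP
      have hci : 0 < c i g := hcpos i g hg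
      rw [Glog_of_ne hP, Glog_of_ne hP]
      have hlogeq : Real.log (c i g * m (f i) / μ (v (i, g)))
          = Real.log (c i g * μ (f i) / μ (v (i, g))) + Real.log (m (f i) / μ (f i)) := by
        rw [← Real.log_mul (by positivity) (by positivity)]
        congr 1
        field_simp
      rw [hlogeq, mul_add]
  have hsumR1 : ∑ i : {x // x ∈ S}, ∑ g ∈ D, Glog (μ (v (i, g))) (c i g * m (f i))
      ≤ (∑ i : {x // x ∈ S}, ∑ g ∈ D, Glog (μ (v (i, g))) (c i g * μ (f i)))
        + ∑ i : {x // x ∈ S}, Glog (μ (f i)) (m (f i)) := by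
    have h2 : ∀ i : {x // x ∈ S},
        ∑ g ∈ D, μ (v (i, g)) * Real.log (m (f i) / μ (f i))
          = Glog (μ (f i)) (m (f i)) := by
      intro i
      rw [← Finset.sum_mul, hmarg_i i]
      by_cases hfi : μ (f i) = 0
      · rw [hfi, Glog_zero, zero_mul]
      · rw [Glog_of_ne hfi]
    calc ∑ i : {x // x ∈ S}, ∑ g ∈ D, Glog (μ (v (i, g))) (c i g * m (f i))
        ≤ ∑ i : {x // x ∈ S}, ∑ g ∈ D, (Glog (μ (v (i, g))) (c i g * μ (f i))
            + μ (v (i, g)) * Real.log (m (f i) / μ (f i))) := by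
          apply Finset.sum_le_sum; intro i _
          exact Finset.sum_le_sum (fun g hg => hR1 i g hg)
      _ = (∑ i : {x // x ∈ S}, ∑ g ∈ D, Glog (μ (v (i, g))) (c i g * μ (f i)))
            + ∑ i : {x // x ∈ S}, Glog (μ (f i)) (m (f i)) := by
          have h4 : ∀ i : {x // x ∈ S},
              ∑ g ∈ D, (Glog (μ (v (i, g))) (c i g * μ (f i))
                + μ (v (i, g)) * Real.log (m (f i) / μ (f i)))
              = (∑ g ∈ D, Glog (μ (v (i, g))) (c i g * μ (f i)))
                + Glog (μ (f i)) (m (f i)) := by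
            intro i
            rw [Finset.sum_add_distrib, h2 i]
          exact (Finset.sum_congr rfl fun i _ => h4 i).trans Finset.sum_add_distrib
  -- the Gibbs part is ≤ 0
  have hGibbs : ∑ i : {x // x ∈ S}, Glog (μ (f i)) (m (f i)) ≤ 0 := by
    have h2 := Glog_sum_le Finset.univ (fun i : {x // x ∈ S} => μ (f i))
      (fun i => m (f i)) (fun i _ => hμfnn i) (fun i _ => hmfnn i) ?_
    · rw [hμfsum, hmfsum] at h2
      have h3 : Glog 1 1 = 0 := by
        rw [Glog_of_ne one_ne_zero]
        simp
      rw [h3] at h2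
      exact h2
    · intro i _ hμpos2
      have hμpos2 : 0 < μ (f i) := hμpos2
      -- μ (f i) > 0 implies some μ (v (i,g)) > 0
      have hex : ∃ g ∈ D, μ (v (i, g)) ≠ 0 := by
        by_contra hcon
        push_neg at hcon
        have : μ (f i) = 0 := by
          rw [← hmarg_i i]
          exact Finset.sum_eq_zero (fun g hg => hcon g hg)
        rw [this] at hμpos2
        exact lt_irrefl _ hμpos2
      obtain ⟨g, hg, hne⟩ := hex
      exact hmf_pos i g hg hne
  -- the main Jensen part
  have hJensen : ∑ i : {x // x ∈ S}, ∑ g ∈ D, Glog (μ (v (i, g))) (c i g * μ (f i))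
      ≤ ∑ g ∈ D, Glog (μ g) (μ (T g) + ε) := by
    rw [Finset.sum_comm]
    apply Finset.sum_le_sum
    intro g hg
    have hJ := Glog_sum_le Finset.univ (fun i : {x // x ∈ S} => μ (v (i, g)))
      (fun i => c i g * μ (f i)) (fun i _ => hPnn i g hg)
      (fun i _ => mul_nonneg (le_of_lt (hcpos i g hg)) (hμfnn i))
      (fun i _ hp => mul_pos (hcpos i g hg)
        (lt_of_lt_of_le hp (hPle_fi i g hg)))
    rw [hmarg_g g hg] at hJ
    refine le_trans hJ ?_
    by_cases hμg : μ g = 0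
    · rw [hμg, Glog_zero, Glog_zero]
    · have hμgpos : 0 < μ g := lt_of_le_of_ne (hμpos g (hgnn g hg)) (Ne.symm hμg)
      have hexi : ∃ i : {x // x ∈ S}, 0 < μ (f i) := by
        by_contra hcon
        push_neg at hcon
        have : ∑ i : {x // x ∈ S}, μ (f i) = 0 :=
          Finset.sum_eq_zero (fun i _ => le_antisymm (hcon i) (hμfnn i))
        rw [hμfsum] at this
        norm_num at this
      obtain ⟨i₀, hi₀⟩ := hexi
      have hypos : 0 < ∑ i : {x // x ∈ S}, c i g * μ (f i) := by
        apply Finset.sum_pos'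
        · intro i _
          exact mul_nonneg (le_of_lt (hcpos i g hg)) (hμfnn i)
        · exact ⟨i₀, Finset.mem_univ i₀, mul_pos (hcpos i₀ g hg) hi₀⟩
      exact Glog_mono (le_of_lt hμgpos) hypos (h3 g hg)
  calc ∑ i : {x // x ∈ S}, ∑ g ∈ D, Glog (μ (v (i, g))) (c i g * m (f i))
      ≤ (∑ i : {x // x ∈ S}, ∑ g ∈ D, Glog (μ (v (i, g))) (c i g * μ (f i)))
        + ∑ i : {x // x ∈ S}, Glog (μ (f i)) (m (f i)) := hsumR1
    _ ≤ (∑ g ∈ D, Glog (μ g) (μ (T g) + ε)) + 0 := add_le_add hJensen hGibbs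
    _ = ∑ g ∈ D, Glog (μ g) (μ (T g) + ε) := add_zero _

end KeyEps

lemma ereal_eq_bot_of_forall_le {a : EReal} (h : ∀ M : ℝ, a ≤ (M : EReal)) : a = ⊥ := by
  induction a using EReal.rec with
  | bot => rfl
  | coe x =>
      have h2 := h (x - 1)
      rw [EReal.coe_le_coe_iff] at h2
      linarith
  | top =>
      have h2 := h 0
      exact absurd h2 (by simp)

/-- For an `α`-invariant measure `μ`, any `n ≥ 1` with `τ_n(μ) > −∞`, and any continuous
partition of unity `D`, one has `τ_n(μ) ≤ Σ_{g ∈ D} μ(g) ln(μ(Aⁿg)/μ(g))`. -/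
theorem tauN_le_eval_at_mu
    {X : Type*} [TopologicalSpace X] [CompactSpace X] [T2Space X]
    (α : C(X, X)) (A : C(X, ℝ) →ₗ[ℝ] C(X, ℝ))
    (hA_pos : ∀ f : C(X, ℝ), 0 ≤ f → 0 ≤ A f)
    (hA_hom : ∀ f g : C(X, ℝ), A ((f.comp α) * g) = f * A g)
    (μ : C(X, ℝ) →ₗ[ℝ] ℝ) (hμ : IsPosNormalized μ)
    (hμinv : ∀ f : C(X, ℝ), μ (f.comp α) = μ f)
    (n : ℕ) (hn : 0 < n) (hfin : tauN A μ n ≠ ⊥)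
    (D : Finset C(X, ℝ)) (hD : IsPartitionOfUnity D) :
    tauN A μ n ≤ ∑ g ∈ D, tSummand (μ g) (μ ((A ^ n) g)) := by
  classical
  have key : ∀ ε : ℝ, 0 < ε →
      tauN A μ n ≤ ((∑ g ∈ D, Glog (μ g) (μ ((A ^ n) g) + ε) : ℝ) : EReal) :=
    fun ε hε => key_eps α A hA_pos hA_hom μ hμ hμinv n D hD ε hε
  have hTgnn : ∀ g ∈ D, 0 ≤ μ ((A ^ n) g) :=
    fun g hg => hμ.1 _ (pow_pos_map A hA_pos n g (hD.1 g hg))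
  by_cases hbad : ∃ g ∈ D, μ g ≠ 0 ∧ μ ((A ^ n) g) = 0
  · -- τ = ⊥ in this case
    obtain ⟨g₀, hg₀, hne, hz⟩ := hbad
    have hr : 0 < μ g₀ := lt_of_le_of_ne (hμ.1 g₀ (hD.1 g₀ hg₀)) (Ne.symm hne)
    set r := μ g₀ with hrdef
    set C : ℝ := ∑ g ∈ D.erase g₀, Glog (μ g) (μ ((A ^ n) g) + 1) with hC
    have hbound : ∀ ε : ℝ, 0 < ε → ε ≤ 1 →
        tauN A μ n ≤ ((r * Real.log (ε / r) + C : ℝ) : EReal) := by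
      intro ε hε hε1
      refine le_trans (key ε hε) ?_
      rw [EReal.coe_le_coe_iff]
      have hsplit : ∑ g ∈ D, Glog (μ g) (μ ((A ^ n) g) + ε)
          = Glog (μ g₀) (μ ((A ^ n) g₀) + ε)
            + ∑ g ∈ D.erase g₀, Glog (μ g) (μ ((A ^ n) g) + ε) :=
        (Finset.add_sum_erase D _ hg₀).symm
      rw [hsplit, hz, zero_add, Glog_of_ne hne]
      apply add_le_add le_rfl
      apply Finset.sum_le_sum
      intro g hg
      have hg' : g ∈ D := Finset.mem_of_mem_erase hg
      exact Glog_mono (hμ.1 g (hD.1 g hg'))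
        (by have := hTgnn g hg'; linarith) (by linarith [hTgnn g hg'])
    have hbot : tauN A μ n = ⊥ := by
      apply ereal_eq_bot_of_forall_le
      intro M
      set ε := min 1 (Real.exp ((M - C) / r + Real.log r)) with hεdef
      have hε : 0 < ε := lt_min one_pos (Real.exp_pos _)
      have hlogε : Real.log ε ≤ (M - C) / r + Real.log r := by
        calc Real.log ε ≤ Real.log (Real.exp ((M - C) / r + Real.log r)) :=
              Real.log_le_log hε (min_le_right _ _)
          _ = (M - C) / r + Real.log r := Real.log_exp _
      have hfinal : r * Real.log (ε / r) + C ≤ M := by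
        rw [Real.log_div (ne_of_gt hε) (ne_of_gt hr)]
        have h2 : r * (Real.log ε - Real.log r) ≤ r * ((M - C) / r) :=
          mul_le_mul_of_nonneg_left (by linarith) (le_of_lt hr)
        rw [mul_div_cancel₀ _ (ne_of_gt hr)] at h2
        linarith
      exact le_trans (hbound ε hε (min_le_left _ _)) (EReal.coe_le_coe_iff.mpr hfinal)
    rw [hbot]
    exact bot_le
  · -- all terms real
    push_neg at hbad
    have hRHS : ∑ g ∈ D, tSummand (μ g) (μ ((A ^ n) g))
        = ((∑ g ∈ D, Glog (μ g) (μ ((A ^ n) g)) : ℝ) : EReal) := by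
      rw [coe_sum_ereal]
      apply Finset.sum_congr rfl
      intro g hg
      by_cases h0 : μ g = 0
      · simp [tSummand, Glog, h0]
      · have hTg := hbad g hg h0
        rw [show tSummand (μ g) (μ ((A ^ n) g))
            = if μ g = 0 then (0 : EReal) else if μ ((A ^ n) g) = 0 then ⊥
              else ((μ g * Real.log (μ ((A ^ n) g) / μ g) : ℝ) : EReal) from rfl,
          if_neg h0, if_neg hTg, Glog_of_ne h0]
    rw [hRHS]
    set F : ℕ → ℝ := fun k => ∑ g ∈ D, Glog (μ g) (μ ((A ^ n) g) + 1 / ((k : ℝ) + 1))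
      with hF
    have hle : ∀ k : ℕ, tauN A μ n ≤ ((F k : ℝ) : EReal) := by
      intro k
      exact key _ (by positivity)
    have htend : Filter.Tendsto F Filter.atTop
        (nhds (∑ g ∈ D, Glog (μ g) (μ ((A ^ n) g)))) := by
      apply tendsto_finset_sum
      intro g hg
      by_cases h0 : μ g = 0
      · simp only [h0, Glog_zero]
        exact tendsto_const_nhds
      · have hTgpos : 0 < μ ((A ^ n) g) :=
          lt_of_le_of_ne (hTgnn g hg) (Ne.symm (hbad g hg h0))
        simp only [Glog_of_ne h0]
        have h1 : Filter.Tendsto (fun k : ℕ => 1 / ((k : ℝ) + 1)) Filter.atTop (nhds 0) :=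
          tendsto_one_div_add_atTop_nhds_zero_nat
        have h2 : Filter.Tendsto (fun k : ℕ => μ ((A ^ n) g) + 1 / ((k : ℝ) + 1))
            Filter.atTop (nhds (μ ((A ^ n) g))) := by
          have := Filter.Tendsto.const_add (μ ((A ^ n) g)) h1
          rwa [add_zero] at this
        have h3 := h2.div_const (μ g)
        have h4 := ((Real.continuousAt_log
          (ne_of_gt (div_pos hTgpos (lt_of_le_of_ne (hμ.1 g (hD.1 g hg))
            (Ne.symm h0))))).tendsto).comp h3
        exact h4.const_mul (μ g)
    exact ge_of_tendsto' (EReal.tendsto_coe.mpr htend) hle
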